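/- Let (R, α) be a Hom-Lie conformal superalgebra and (ρ, M, β) a representation of R. Then the direct sum R ⊕ M, with ∂(a + u) = ∂a + ∂u, λ-bracket [(a+u)_λ (b+v)]_M = [a_λ b] + ρ(a)_λ v − (−1)^{|a||b|} ρ(b)_{−∂−λ} u for a, b ∈ R and u, v ∈ M, and twist map (α+β)(a+u) = α(a) + β(u), is a Hom-Lie conformal superalgebra. -/

import Mathlib

noncomputable section

namespace HLCS

open scoped BigOperators

/-- Evaluation at `l : ℂ` of a polynomial (in `λ`) with coefficients in `M`,
encoded as a finitely supported family of coefficients. -/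
def pev {M : Type} [AddCommGroup M] [Module ℂ M] (l : ℂ) (p : ℕ →₀ M) : M :=
  p.sum fun n r => l ^ n • r

/-- Evaluation of a polynomial with coefficients in `M` at an operator `T`
(used for substitutions such as `-λ - ∂`). -/
def pevOp {M : Type} [AddCommGroup M] [Module ℂ M] (T : Module.End ℂ M) (p : ℕ →₀ M) : M :=
  p.sum fun n r => (T ^ n) r

/-- The super sign `(-1)^{|a||b|}` attached to parities `i`, `j`. -/
def sg (i j : ZMod 2) : ℂ := (-1 : ℂ) ^ (i * j).val

/-- The data of a `ℤ₂`-graded `ℂ[∂]`-module `R` with an endomorphism `α` and a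
`ℂ`-bilinear `λ`-bracket with values in `ℂ[λ] ⊗ R` (encoded by its coefficients). -/
structure Data (R : Type) [AddCommGroup R] [Module ℂ R] where
  der : Module.End ℂ R
  alpha : Module.End ℂ R
  G : ZMod 2 → Submodule ℂ R
  br : R →ₗ[ℂ] R →ₗ[ℂ] (ℕ →₀ R)

namespace Data

variable {R : Type} [AddCommGroup R] [Module ℂ R] (S : Data R)

/-- `[a_λ b]` evaluated at `λ = l`. -/
def lb (l : ℂ) (a b : R) : R := pev l (S.br a b)

/-- `[a_{-l-∂} b]` : the bracket with `-l - ∂` substituted for `λ`. -/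
def lbOp (l : ℂ) (a b : R) : R :=
  pevOp ((-l) • (1 : Module.End ℂ R) - S.der) (S.br a b)

/-- Multiplicativity: `α [a_λ b] = [α(a)_λ α(b)]`. -/
def Mult : Prop := ∀ (l : ℂ) (a b : R), S.alpha (S.lb l a b) = S.lb l (S.alpha a) (S.alpha b)

end Data

variable {R : Type} [AddCommGroup R] [Module ℂ R]

/-- `(R, α)` with the given data is a Hom-Lie conformal superalgebra.
All polynomial identities in `λ, μ` are stated by evaluating at arbitrary
complex numbers (which is equivalent, `ℂ` being infinite). -/
structure IsHLCS (S : Data R) : Prop where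
  internal : DirectSum.IsInternal S.G
  der_even : ∀ i, ∀ a ∈ S.G i, S.der a ∈ S.G i
  alpha_even : ∀ i, ∀ a ∈ S.G i, S.alpha a ∈ S.G i
  alpha_der : ∀ a, S.alpha (S.der a) = S.der (S.alpha a)
  br_grade : ∀ i j, ∀ a ∈ S.G i, ∀ b ∈ S.G j, ∀ n, S.br a b n ∈ S.G (i + j)
  conf_left : ∀ (l : ℂ) (a b : R), S.lb l (S.der a) b = -l • S.lb l a b
  conf_right : ∀ (l : ℂ) (a b : R), S.lb l a (S.der b) = S.der (S.lb l a b) + l • S.lb l a b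
  skew : ∀ i j, ∀ a ∈ S.G i, ∀ b ∈ S.G j, ∀ l : ℂ,
    S.lb l a b = (-sg i j) • S.lbOp l b a
  jacobi : ∀ i j, ∀ a ∈ S.G i, ∀ b ∈ S.G j, ∀ (c : R) (l m : ℂ),
    S.lb l (S.alpha a) (S.lb m b c) =
      S.lb (l + m) (S.lb l a b) (S.alpha c) + sg i j • S.lb m (S.alpha b) (S.lb l a c)

end HLCS
namespace HLCS

variable {R M : Type} [AddCommGroup R] [Module ℂ R] [AddCommGroup M] [Module ℂ M]

/-- The data of a conformal module `(M, β)` over `R`: a `ℤ₂`-graded `ℂ[∂]`-module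
together with a map `ρ` sending `a ∈ R` to a conformal linear map on `M`
(encoded via its `λ`-coefficients). -/
structure RepData (R M : Type) [AddCommGroup R] [Module ℂ R]
    [AddCommGroup M] [Module ℂ M] where
  derM : Module.End ℂ M
  beta : Module.End ℂ M
  GM : ZMod 2 → Submodule ℂ M
  rho : R →ₗ[ℂ] M →ₗ[ℂ] (ℕ →₀ M)

namespace RepData

variable (P : RepData R M)

/-- `ρ(a)_λ m` evaluated at `λ = l`. -/
def ev (l : ℂ) (a : R) (m : M) : M := pev l (P.rho a m)

/-- `ρ(a)_{-l-∂} m`. -/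
def evOp (l : ℂ) (a : R) (m : M) : M :=
  pevOp ((-l) • (1 : Module.End ℂ M) - P.derM) (P.rho a m)

end RepData

/-- `(ρ, M, β)` is a representation of the Hom-Lie conformal superalgebra `(R, α)`. -/
structure IsRep (S : Data R) (P : RepData R M) : Prop where
  internal : DirectSum.IsInternal P.GM
  derM_even : ∀ i, ∀ m ∈ P.GM i, P.derM m ∈ P.GM i
  beta_even : ∀ i, ∀ m ∈ P.GM i, P.beta m ∈ P.GM i
  beta_derM : ∀ m, P.beta (P.derM m) = P.derM (P.beta m)
  rho_grade : ∀ i j, ∀ a ∈ S.G i, ∀ m ∈ P.GM j, ∀ n, P.rho a m n ∈ P.GM (i + j)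
  conf_left : ∀ (l : ℂ) (a : R) (m : M), P.ev l (S.der a) m = -l • P.ev l a m
  conf_right : ∀ (l : ℂ) (a : R) (m : M),
    P.ev l a (P.derM m) = P.derM (P.ev l a m) + l • P.ev l a m
  beta_comm : ∀ (l : ℂ) (a : R) (m : M), P.ev l a (P.beta m) = P.beta (P.ev l a m)
  module_axiom : ∀ i j, ∀ a ∈ S.G i, ∀ b ∈ S.G j, ∀ (u : M) (l m : ℂ),
    P.ev (l + m) (S.lb l a b) (P.beta u) =
      P.ev l (S.alpha a) (P.ev m b u) - sg i j • P.ev m (S.alpha b) (P.ev l a u)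

end HLCS
namespace HLCS

variable {R M : Type} [AddCommGroup R] [Module ℂ R] [AddCommGroup M] [Module ℂ M]

section PolyHelpers
variable {N N' : Type} [AddCommGroup N] [Module ℂ N] [AddCommGroup N'] [Module ℂ N']

def pevLM (l : ℂ) : (ℕ →₀ N) →ₗ[ℂ] N := Finsupp.lsum ℂ fun n => (l ^ n) • (LinearMap.id : N →ₗ[ℂ] N)
lemma pev_eq (l : ℂ) (p : ℕ →₀ N) : pev l p = pevLM l p := rfl
def pevOpLM (T : Module.End ℂ N) : (ℕ →₀ N) →ₗ[ℂ] N := Finsupp.lsum ℂ fun n => T ^ n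
lemma pevOp_eq (T : Module.End ℂ N) (p : ℕ →₀ N) : pevOp T p = pevOpLM T p := rfl

@[simp] lemma pev_single (l : ℂ) (n : ℕ) (r : N) : pev l (Finsupp.single n r) = l ^ n • r := by
  simp [pev, Finsupp.sum_single_index]
@[simp] lemma pevOp_single (T : Module.End ℂ N) (n : ℕ) (r : N) :
    pevOp T (Finsupp.single n r) = (T ^ n) r := by
  simp [pevOp, Finsupp.sum_single_index]
@[simp] lemma pev_add (l : ℂ) (p q : ℕ →₀ N) : pev l (p + q) = pev l p + pev l q := by
  simp [pev_eq]
@[simp] lemma pev_zero (l : ℂ) : pev l (0 : ℕ →₀ N) = 0 := by simp [pev_eq]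
@[simp] lemma pev_neg (l : ℂ) (p : ℕ →₀ N) : pev l (-p) = -pev l p := by simp [pev_eq]
@[simp] lemma pev_sub (l : ℂ) (p q : ℕ →₀ N) : pev l (p - q) = pev l p - pev l q := by
  simp [pev_eq]
@[simp] lemma pev_smul (l c : ℂ) (p : ℕ →₀ N) : pev l (c • p) = c • pev l p := by simp [pev_eq]
@[simp] lemma pevOp_add (T : Module.End ℂ N) (p q : ℕ →₀ N) :
    pevOp T (p + q) = pevOp T p + pevOp T q := by simp [pevOp_eq]
@[simp] lemma pevOp_zero (T : Module.End ℂ N) : pevOp T (0 : ℕ →₀ N) = 0 := by simp [pevOp_eq]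
@[simp] lemma pevOp_neg (T : Module.End ℂ N) (p : ℕ →₀ N) : pevOp T (-p) = -pevOp T p := by
  simp [pevOp_eq]
@[simp] lemma pevOp_sub (T : Module.End ℂ N) (p q : ℕ →₀ N) :
    pevOp T (p - q) = pevOp T p - pevOp T q := by simp [pevOp_eq]
@[simp] lemma pevOp_smul (T : Module.End ℂ N) (c : ℂ) (p : ℕ →₀ N) :
    pevOp T (c • p) = c • pevOp T p := by simp [pevOp_eq]

lemma pev_pevOp (l : ℂ) (p : ℕ →₀ N) : pev l p = pevOp (l • (1 : Module.End ℂ N)) p := by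
  induction p using Finsupp.induction_linear with
  | zero => simp
  | add f g hf hg => simp [hf, hg]
  | single n r => simp [smul_pow]

lemma comp_pow (F : N →ₗ[ℂ] N') (T : Module.End ℂ N) (T' : Module.End ℂ N')
    (h : F ∘ₗ T = T' ∘ₗ F) (n : ℕ) : F ∘ₗ (T ^ n) = (T' ^ n) ∘ₗ F := by
  induction n with
  | zero => ext x; simp
  | succ n ih =>
    rw [pow_succ, pow_succ, Module.End.mul_eq_comp, Module.End.mul_eq_comp,
      ← LinearMap.comp_assoc, ih, LinearMap.comp_assoc, h, ← LinearMap.comp_assoc]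

lemma pevOp_mapC (F : N →ₗ[ℂ] N') (T : Module.End ℂ N) (T' : Module.End ℂ N')
    (h : F ∘ₗ T = T' ∘ₗ F) (p : ℕ →₀ N) :
    pevOp T' (Finsupp.mapRange.linearMap F p) = F (pevOp T p) := by
  induction p using Finsupp.induction_linear with
  | zero => simp
  | add f g hf hg => rw [map_add, pevOp_add, hf, hg, pevOp_add, map_add]
  | single n r =>
    simp only [Finsupp.mapRange.linearMap_apply, Finsupp.mapRange_single, pevOp_single]
    exact (LinearMap.ext_iff.mp (comp_pow F T T' h n) r).symm

lemma pev_mapC (F : N →ₗ[ℂ] N') (l : ℂ) (p : ℕ →₀ N) :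
    pev l (Finsupp.mapRange.linearMap F p) = F (pev l p) := by
  induction p using Finsupp.induction_linear with
  | zero => simp
  | add f g hf hg => rw [map_add, pev_add, hf, hg, pev_add, map_add]
  | single n r => simp


def UpLM : (ℕ →₀ N) →ₗ[ℂ] (ℕ →₀ N) := Finsupp.lsum ℂ fun n => Finsupp.lsingle (n + 1)

def TwLM (D : Module.End ℂ N) : (ℕ →₀ N) →ₗ[ℂ] (ℕ →₀ N) :=
  Finsupp.lsum ℂ fun n => ∑ k ∈ Finset.range (n + 1),
    (Finsupp.lsingle k).comp ((((-1 : ℂ) ^ n * (n.choose k : ℂ))) • (D ^ (n - k)))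

def ShLM (l : ℂ) : (ℕ →₀ N) →ₗ[ℂ] (ℕ →₀ N) :=
  Finsupp.lsum ℂ fun n => ∑ k ∈ Finset.range (n + 1),
    (Finsupp.lsingle k).comp (((l ^ (n - k) * (n.choose k : ℂ))) • (LinearMap.id : N →ₗ[ℂ] N))

@[simp] lemma UpLM_single (n : ℕ) (r : N) :
    UpLM (Finsupp.single n r) = Finsupp.single (n + 1) r := by
  simp [UpLM]

lemma TwLM_single (D : Module.End ℂ N) (n : ℕ) (r : N) :
    TwLM D (Finsupp.single n r) = ∑ k ∈ Finset.range (n + 1),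
      Finsupp.single k ((((-1 : ℂ) ^ n * (n.choose k : ℂ))) • (D ^ (n - k)) r) := by
  simp [TwLM, LinearMap.sum_apply]

lemma ShLM_single (l : ℂ) (n : ℕ) (r : N) :
    ShLM l (Finsupp.single n r) = ∑ k ∈ Finset.range (n + 1),
      Finsupp.single k ((l ^ (n - k) * (n.choose k : ℂ)) • r) := by
  simp [ShLM, LinearMap.sum_apply]

lemma pevOp_Up (T : Module.End ℂ N) (p : ℕ →₀ N) : pevOp T (UpLM p) = T (pevOp T p) := by
  induction p using Finsupp.induction_linear with
  | zero => simp
  | add f g hf hg => rw [map_add, pevOp_add, hf, hg, pevOp_add, map_add]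
  | single n r => rw [UpLM_single, pevOp_single, pevOp_single, pow_succ', Module.End.mul_apply]

lemma natCast_end (C : ℕ) : ((C : Module.End ℂ N)) = (C : ℂ) • (1 : Module.End ℂ N) := by
  rw [← map_natCast (algebraMap ℂ (Module.End ℂ N)) C, Algebra.algebraMap_eq_smul_one]

lemma negone_pow_end (n : ℕ) :
    ((-1 : Module.End ℂ N)) ^ n = ((-1 : ℂ) ^ n) • (1 : Module.End ℂ N) := by
  have : (-1 : Module.End ℂ N) = (-1 : ℂ) • 1 := by rw [neg_smul, one_smul]
  rw [this, smul_pow, one_pow]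

lemma pevOp_Tw (T D : Module.End ℂ N) (h : Commute T D) (p : ℕ →₀ N) :
    pevOp T (TwLM D p) = pevOp (-(T + D)) p := by
  induction p using Finsupp.induction_linear with
  | zero => simp
  | add f g hf hg => rw [map_add, pevOp_add, hf, hg, pevOp_add]
  | single n r =>
    have key : (-(T + D)) ^ n
        = ∑ k ∈ Finset.range (n + 1),
            ((-1 : ℂ) ^ n * (n.choose k : ℂ)) • (T ^ k * D ^ (n - k)) := by
      rw [neg_pow (T + D), h.add_pow, Finset.mul_sum]
      refine Finset.sum_congr rfl fun k _ => ?_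
      rw [negone_pow_end, natCast_end, smul_mul_assoc, one_mul, mul_smul_comm, mul_one, smul_smul]
    rw [TwLM_single, pevOp_eq, map_sum, pevOp_single, key, LinearMap.sum_apply]
    refine Finset.sum_congr rfl fun k _ => ?_
    simp [← pevOp_eq, Module.End.mul_apply]


lemma smul_one_commute (l : ℂ) (T : Module.End ℂ N) : Commute (l • (1 : Module.End ℂ N)) T :=
  (Commute.one_left T).smul_left l

lemma neg_smul_one_sub (l : ℂ) (D : Module.End ℂ N) :
    -(l • (1 : Module.End ℂ N) + D) = (-l) • (1 : Module.End ℂ N) - D := by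
  module

lemma pev_Tw (l : ℂ) (D : Module.End ℂ N) (p : ℕ →₀ N) :
    pev l (TwLM D p) = pevOp ((-l) • (1 : Module.End ℂ N) - D) p := by
  rw [pev_pevOp, pevOp_Tw _ _ (smul_one_commute l D), neg_smul_one_sub]

lemma pevOp_Sh (T : Module.End ℂ N) (l : ℂ) (p : ℕ →₀ N) :
    pevOp T (ShLM l p) = pevOp (l • (1 : Module.End ℂ N) + T) p := by
  induction p using Finsupp.induction_linear with
  | zero => simp
  | add f g hf hg => rw [map_add, pevOp_add, hf, hg, pevOp_add]
  | single n r =>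
    have key : (l • (1 : Module.End ℂ N) + T) ^ n
        = ∑ k ∈ Finset.range (n + 1), (l ^ (n - k) * (n.choose k : ℂ)) • (T ^ k) := by
      rw [add_comm, (smul_one_commute l T).symm.add_pow, ]
      refine Finset.sum_congr rfl fun k _ => ?_
      rw [smul_pow, one_pow, natCast_end, mul_smul_comm, mul_smul_comm, mul_one, smul_smul,
        mul_one, mul_comm ((n.choose k : ℂ))]
    rw [ShLM_single, pevOp_eq, map_sum, pevOp_single, key, LinearMap.sum_apply]
    refine Finset.sum_congr rfl fun k _ => ?_
    simp [← pevOp_eq]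

lemma pev_Sh (m l : ℂ) (p : ℕ →₀ N) : pev m (ShLM l p) = pev (l + m) p := by
  rw [pev_pevOp, pevOp_Sh, pev_pevOp, add_smul]

lemma pev_poly (f : ℕ →₀ ℂ) (l : ℂ) : Polynomial.eval l ⟨⟨f⟩⟩ = pev l f := by
  rw [Polynomial.eval_eq_sum, Polynomial.sum_def, Polynomial.support_ofFinsupp, pev, Finsupp.sum]
  refine Finset.sum_congr rfl fun n _ => ?_
  rw [Polynomial.coeff_ofFinsupp, smul_eq_mul, mul_comm]

lemma pev_inj_c (f g : ℕ →₀ ℂ) (h : ∀ l : ℂ, pev l f = pev l g) : f = g := by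
  have : (⟨⟨f⟩⟩ : Polynomial ℂ) = ⟨⟨g⟩⟩ :=
    Polynomial.funext fun l => by rw [pev_poly, pev_poly]; exact h l
  simpa using this

lemma pev_inj (p q : ℕ →₀ N) (h : ∀ l : ℂ, pev l p = pev l q) : p = q := by
  ext n
  rw [← sub_eq_zero, ← Module.forall_dual_apply_eq_zero_iff ℂ (p n - q n)]
  intro φ
  have h2 := pev_inj_c (Finsupp.mapRange.linearMap φ p) (Finsupp.mapRange.linearMap φ q)
    (fun l => by rw [pev_mapC, pev_mapC, h])
  have h3 : φ (p n) = φ (q n) := by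
    have := Finsupp.ext_iff.mp h2 n
    simpa using this
  rw [map_sub, h3, sub_self]

lemma pev_mem (A : Submodule ℂ N) (p : ℕ →₀ N) (hp : ∀ n, p n ∈ A) (l : ℂ) : pev l p ∈ A := by
  rw [pev, Finsupp.sum]
  exact Submodule.sum_mem _ fun n _ => A.smul_mem _ (hp n)

lemma pow_mem_end (A : Submodule ℂ N) (T : Module.End ℂ N) (hT : ∀ x ∈ A, T x ∈ A) (n : ℕ) :
    ∀ x ∈ A, (T ^ n) x ∈ A := by
  induction n with
  | zero => intro x hx; simpa using hx
  | succ n ih =>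
    intro x hx
    rw [pow_succ, Module.End.mul_apply]
    exact ih _ (hT _ hx)

lemma pevOp_mem (A : Submodule ℂ N) (T : Module.End ℂ N) (hT : ∀ x ∈ A, T x ∈ A)
    (p : ℕ →₀ N) (hp : ∀ n, p n ∈ A) : pevOp T p ∈ A := by
  rw [pevOp, Finsupp.sum]
  exact Submodule.sum_mem _ fun n _ => pow_mem_end A T hT n _ (hp n)

lemma TwLM_coeff_mem (A : Submodule ℂ N) (D : Module.End ℂ N) (hD : ∀ x ∈ A, D x ∈ A)
    (p : ℕ →₀ N) (hp : ∀ n, p n ∈ A) (j : ℕ) : (TwLM D p) j ∈ A := by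
  rw [TwLM, Finsupp.lsum_apply, Finsupp.sum, Finsupp.finset_sum_apply]
  refine Submodule.sum_mem _ fun n _ => ?_
  rw [LinearMap.sum_apply, Finsupp.finset_sum_apply]
  refine Submodule.sum_mem _ fun k _ => ?_
  simp only [LinearMap.coe_comp, Function.comp_apply, LinearMap.smul_apply, LinearMap.id_coe,
    Finsupp.lsingle_apply, Finsupp.single_apply]
  split
  · exact A.smul_mem _ (pow_mem_end A D hD _ _ (hp n))
  · exact A.zero_mem

end PolyHelpers


section SgPrj

lemma z2cases : ∀ i : ZMod 2, i = 0 ∨ i = 1 := by decide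

lemma sg_vals : sg 0 0 = 1 ∧ sg 0 1 = 1 ∧ sg 1 0 = 1 ∧ sg 1 1 = -1 := by
  refine ⟨?_, ?_, ?_, ?_⟩
  · rw [sg, show ((0 : ZMod 2) * 0).val = 0 from rfl]; norm_num
  · rw [sg, show ((0 : ZMod 2) * 1).val = 0 from rfl]; norm_num
  · rw [sg, show ((1 : ZMod 2) * 0).val = 0 from rfl]; norm_num
  · rw [sg, show ((1 : ZMod 2) * 1).val = 1 from rfl]; norm_num

lemma sg_comm (i j : ZMod 2) : sg i j = sg j i := by rw [sg, sg, mul_comm]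

lemma sg_mul_self (i j : ZMod 2) : sg i j * sg i j = 1 := by
  rcases z2cases i with h | h <;> rcases z2cases j with h' | h' <;>
    simp [h, h', sg_vals.1, sg_vals.2.1, sg_vals.2.2.1, sg_vals.2.2.2]

lemma sg_add_right (i j k : ZMod 2) : sg i (j + k) = sg i j * sg i k := by
  rcases z2cases i with h | h <;> rcases z2cases j with h' | h' <;> rcases z2cases k with h'' | h'' <;>
    · subst h; subst h'; subst h''
      norm_num [sg_vals.1, sg_vals.2.1, sg_vals.2.2.1, sg_vals.2.2.2]
      try rfl

variable {N : Type} [AddCommGroup N] [Module ℂ N]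

def prj2 (A : ZMod 2 → Submodule ℂ N) (hc : IsCompl (A 0) (A 1)) (i : ZMod 2) :
    Module.End ℂ N :=
  if i = 0 then (A 0).subtype ∘ₗ ((A 0).projectionOnto (A 1) hc)
  else (A 1).subtype ∘ₗ ((A 1).projectionOnto (A 0) hc.symm)

variable {A : ZMod 2 → Submodule ℂ N} (hc : IsCompl (A 0) (A 1))

lemma prj2_mem (i : ZMod 2) (x : N) : prj2 A hc i x ∈ A i := by
  rcases z2cases i with h | h <;> subst h <;> simp [prj2, Submodule.coe_mem]

lemma prj2_sum (x : N) : prj2 A hc 0 x + prj2 A hc 1 x = x := by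
  simp only [prj2, if_pos rfl, if_neg (by decide : (1 : ZMod 2) ≠ 0)]
  exact Submodule.projection_add_projection_eq_self hc x

lemma prj2_of_mem {i : ZMod 2} {x : N} (hx : x ∈ A i) : prj2 A hc i x = x := by
  rcases z2cases i with h | h <;> subst h
  · simp only [prj2, if_pos rfl]
    exact Submodule.projection_apply_of_mem_left hc hx
  · simp only [prj2, if_neg (by decide : (1 : ZMod 2) ≠ 0)]
    exact Submodule.projection_apply_of_mem_left hc.symm hx

lemma prj2_of_ne {i j : ZMod 2} (hij : i ≠ j) {x : N} (hx : x ∈ A j) : prj2 A hc i x = 0 := by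
  rcases z2cases i with h | h <;> subst h <;> rcases z2cases j with h' | h' <;> subst h' <;>
    first
    | exact absurd rfl hij
    | · simp only [prj2, if_pos rfl]
        simpa using congrArg Subtype.val
          (Submodule.projectionOnto_apply_of_mem_right hc hx)
    | · simp only [prj2, if_neg (by decide : (1 : ZMod 2) ≠ 0)]
        simpa using congrArg Subtype.val
          (Submodule.projectionOnto_apply_of_mem_right hc.symm hx)

lemma prj2_comm (f : Module.End ℂ N) (hf : ∀ i, ∀ x ∈ A i, f x ∈ A i) (i : ZMod 2) (x : N) :
    prj2 A hc i (f x) = f (prj2 A hc i x) := by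
  have hx := prj2_sum hc x
  have e0 := prj2_mem hc 0 x
  have e1 := prj2_mem hc 1 x
  rcases z2cases i with h | h <;> subst h
  · calc prj2 A hc 0 (f x) = prj2 A hc 0 (f (prj2 A hc 0 x) + f (prj2 A hc 1 x)) := by
          rw [← map_add, hx]
      _ = f (prj2 A hc 0 x) := by
          rw [map_add, prj2_of_mem hc (hf 0 _ e0),
            prj2_of_ne hc (by decide) (hf 1 _ e1), add_zero]
  · calc prj2 A hc 1 (f x) = prj2 A hc 1 (f (prj2 A hc 0 x) + f (prj2 A hc 1 x)) := by
          rw [← map_add, hx]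
      _ = f (prj2 A hc 1 x) := by
          rw [map_add, prj2_of_ne hc (by decide) (hf 0 _ e0),
            prj2_of_mem hc (hf 1 _ e1), zero_add]

lemma univ_z2 : (Set.univ : Set (ZMod 2)) = {0, 1} := by
  ext i; simp [z2cases i]

lemma isCompl_of_isInternal (h : DirectSum.IsInternal A) : IsCompl (A 0) (A 1) :=
  (DirectSum.isInternal_submodule_iff_isCompl A (by decide) univ_z2).mp h

lemma isInternal_of_isCompl (h : IsCompl (A 0) (A 1)) : DirectSum.IsInternal A :=
  (DirectSum.isInternal_submodule_iff_isCompl A (by decide) univ_z2).mpr h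

end SgPrj


section Main

def inlF : (ℕ →₀ R) →ₗ[ℂ] (ℕ →₀ (R × M)) := Finsupp.mapRange.linearMap (LinearMap.inl ℂ R M)
def inrF : (ℕ →₀ M) →ₗ[ℂ] (ℕ →₀ (R × M)) := Finsupp.mapRange.linearMap (LinearMap.inr ℂ R M)

variable (S : Data R) (P : RepData R M)

/-- second component of the semidirect bracket, as a bilinear expression using
projections onto the graded pieces. -/
def sec (hcR : IsCompl (S.G 0) (S.G 1)) (hcM : IsCompl (P.GM 0) (P.GM 1))
    (x y : R × M) : ℕ →₀ M :=
  P.rho x.1 y.2 - ∑ p : ZMod 2, ∑ q : ZMod 2,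
    sg p q • TwLM P.derM (P.rho (prj2 S.G hcR q y.1) (prj2 P.GM hcM p x.2))

variable {S P}
variable (hcR : IsCompl (S.G 0) (S.G 1)) (hcM : IsCompl (P.GM 0) (P.GM 1))

lemma sec_add_left (x x' y : R × M) :
    sec S P hcR hcM (x + x') y = sec S P hcR hcM x y + sec S P hcR hcM x' y := by
  simp only [sec, Prod.fst_add, Prod.snd_add, map_add, LinearMap.add_apply, smul_add,
    Finset.sum_add_distrib]
  abel

lemma sec_smul_left (c : ℂ) (x y : R × M) :
    sec S P hcR hcM (c • x) y = c • sec S P hcR hcM x y := by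
  simp only [sec, Prod.smul_fst, Prod.smul_snd, map_smul, LinearMap.smul_apply, smul_sub,
    Finset.smul_sum, smul_comm c]

lemma sec_add_right (x y y' : R × M) :
    sec S P hcR hcM x (y + y') = sec S P hcR hcM x y + sec S P hcR hcM x y' := by
  simp only [sec, Prod.fst_add, Prod.snd_add, map_add, LinearMap.add_apply, smul_add,
    Finset.sum_add_distrib]
  abel

lemma sec_smul_right (c : ℂ) (x y : R × M) :
    sec S P hcR hcM x (c • y) = c • sec S P hcR hcM x y := by
  simp only [sec, Prod.smul_fst, Prod.smul_snd, map_smul, LinearMap.smul_apply, smul_sub,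
    Finset.smul_sum, smul_comm c]

/-- The semidirect-sum data on `R × M`. -/
def Tdat : Data (R × M) where
  der := LinearMap.prodMap (S.der : R →ₗ[ℂ] R) (P.derM : M →ₗ[ℂ] M)
  alpha := LinearMap.prodMap (S.alpha : R →ₗ[ℂ] R) (P.beta : M →ₗ[ℂ] M)
  G := fun i => (S.G i).prod (P.GM i)
  br := LinearMap.mk₂ ℂ
    (fun x y => inlF (S.br x.1 y.1) + inrF (sec S P hcR hcM x y))
    (fun x x' y => by
      rw [sec_add_left]; simp only [Prod.fst_add, map_add, LinearMap.add_apply]; abel)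
    (fun c x y => by
      rw [sec_smul_left]; simp only [Prod.smul_fst, map_smul, LinearMap.smul_apply, smul_add])
    (fun x y y' => by
      rw [sec_add_right]; simp only [Prod.fst_add, map_add]; abel)
    (fun c x y => by
      rw [sec_smul_right]; simp only [Prod.smul_fst, map_smul, smul_add])

lemma Tdat_br (x y : R × M) :
    (Tdat hcR hcM).br x y = inlF (S.br x.1 y.1) + inrF (sec S P hcR hcM x y) := rfl

lemma pair_pev (l : ℂ) (r : ℕ →₀ R) (s : ℕ →₀ M) :
    pev l (inlF r + inrF s) = (pev l r, pev l s) := by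
  rw [pev_add, inlF, inrF, pev_mapC, pev_mapC]
  simp

lemma pair_coeff (r : ℕ →₀ R) (s : ℕ →₀ M) (n : ℕ) :
    ((inlF r + inrF s : ℕ →₀ (R × M))) n = (r n, s n) := by
  simp [inlF, inrF, Finsupp.mapRange.linearMap_apply, Finsupp.mapRange_apply]

lemma pair_pevOp (l : ℂ) (A : Module.End ℂ R) (B : Module.End ℂ M)
    (r : ℕ →₀ R) (s : ℕ →₀ M) :
    pevOp ((-l) • 1 - LinearMap.prodMap A B) (inlF r + inrF s)
      = (pevOp ((-l) • 1 - A) r, pevOp ((-l) • 1 - B) s) := by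
  have h1 : (LinearMap.inl ℂ R M) ∘ₗ ((-l) • 1 - A)
      = ((-l) • 1 - LinearMap.prodMap A B) ∘ₗ (LinearMap.inl ℂ R M) := by
    ext x <;> simp
  have h2 : (LinearMap.inr ℂ R M) ∘ₗ ((-l) • 1 - B)
      = ((-l) • 1 - LinearMap.prodMap A B) ∘ₗ (LinearMap.inr ℂ R M) := by
    ext x <;> simp
  rw [pevOp_add, inlF, inrF, pevOp_mapC _ _ _ h1, pevOp_mapC _ _ _ h2]
  simp

end Main



section RepLemmas
set_option linter.unusedSectionVars false
variable {S : Data R} {P : RepData R M} (hP : IsRep S P)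
include hP

omit hP in
lemma ev_def (l : ℂ) (a : R) (x : M) : P.ev l a x = pev l (P.rho a x) := rfl
omit hP in
lemma evOp_def (l : ℂ) (a : R) (x : M) :
    P.evOp l a x = pevOp ((-l) • (1 : Module.End ℂ M) - P.derM) (P.rho a x) := rfl
omit hP in
lemma lb_def (l : ℂ) (a b : R) : S.lb l a b = pev l (S.br a b) := rfl

omit hP in
lemma ev_sub (l : ℂ) (a : R) (x y : M) : P.ev l a (x - y) = P.ev l a x - P.ev l a y := by
  simp [RepData.ev, map_sub]
omit hP in
lemma ev_smul2 (l c : ℂ) (a : R) (x : M) : P.ev l a (c • x) = c • P.ev l a x := by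
  simp [RepData.ev, map_smul]
omit hP in
lemma evOp_sub (l : ℂ) (a : R) (x y : M) : P.evOp l a (x - y) = P.evOp l a x - P.evOp l a y := by
  simp [RepData.evOp, map_sub]
omit hP in
lemma evOp_smul2 (l c : ℂ) (a : R) (x : M) : P.evOp l a (c • x) = c • P.evOp l a x := by
  simp [RepData.evOp, map_smul]

omit hP in
lemma pev_Up (l : ℂ) (p : ℕ →₀ M) : pev l (UpLM p) = l • pev l p := by
  rw [pev_pevOp, pevOp_Up, LinearMap.smul_apply, Module.End.one_apply, ← pev_pevOp]

/-- `ρ(a)_λ (∂ u) = ∂ ρ(a)_λ u + λ ρ(a)_λ u` at the level of coefficients. -/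
lemma rho_der_right (a : R) (u : M) :
    P.rho a (P.derM u)
      = Finsupp.mapRange.linearMap P.derM (P.rho a u) + UpLM (P.rho a u) := by
  apply pev_inj; intro l
  rw [pev_add, pev_mapC, pev_Up, ← ev_def, ← ev_def, hP.conf_right]

/-- `ρ(∂ a)_λ u = -λ ρ(a)_λ u` at the level of coefficients. -/
lemma rho_der_left (a : R) (u : M) :
    P.rho (S.der a) u = -(UpLM (P.rho a u)) := by
  apply pev_inj; intro l
  rw [pev_neg, pev_Up, ← ev_def, ← ev_def, hP.conf_left, neg_smul]

omit hP in
lemma derM_commute (l : ℂ) :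
    Commute ((-l) • (1 : Module.End ℂ M) - P.derM) P.derM :=
  ((Commute.one_left P.derM).smul_left (-l)).sub_left (Commute.refl P.derM)

omit hP in
lemma derM_comp_comm (l : ℂ) :
    P.derM ∘ₗ ((-l) • (1 : Module.End ℂ M) - P.derM)
      = ((-l) • (1 : Module.End ℂ M) - P.derM) ∘ₗ P.derM :=
  (derM_commute (P := P) l).symm.eq

/-- substitution of `-l-∂` in `ρ(b)_λ (∂u)`. -/
lemma pevOp_rho_der_right (l : ℂ) (b : R) (u : M) :
    pevOp ((-l) • (1 : Module.End ℂ M) - P.derM) (P.rho b (P.derM u))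
      = P.derM (pevOp ((-l) • 1 - P.derM) (P.rho b u))
        + (((-l) • (1 : Module.End ℂ M) - P.derM)) (pevOp ((-l) • 1 - P.derM) (P.rho b u)) := by
  rw [rho_der_right hP, pevOp_add, pevOp_Up,
    pevOp_mapC P.derM _ _ (derM_comp_comm l)]

lemma pevOp_rho_der_right' (l : ℂ) (b : R) (u : M) :
    pevOp ((-l) • (1 : Module.End ℂ M) - P.derM) (P.rho b (P.derM u))
      = (-l) • pevOp ((-l) • 1 - P.derM) (P.rho b u) := by
  rw [pevOp_rho_der_right hP]
  set Z := pevOp ((-l) • (1 : Module.End ℂ M) - P.derM) (P.rho b u)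
  simp only [LinearMap.sub_apply, LinearMap.smul_apply, Module.End.one_apply]
  abel

lemma pevOp_rho_der_left (l : ℂ) (b : R) (u : M) :
    pevOp ((-l) • (1 : Module.End ℂ M) - P.derM) (P.rho (S.der b) u)
      = l • pevOp ((-l) • 1 - P.derM) (P.rho b u)
        + P.derM (pevOp ((-l) • 1 - P.derM) (P.rho b u)) := by
  rw [rho_der_left hP, pevOp_neg, pevOp_Up]
  set Z := pevOp ((-l) • (1 : Module.End ℂ M) - P.derM) (P.rho b u)
  simp only [LinearMap.sub_apply, LinearMap.smul_apply, Module.End.one_apply]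
  module

/-- coefficientwise (in `μ`) form of the module axiom, for a fixed `l`. -/
lemma axF {i j : ZMod 2} {a b : R} (ha : a ∈ S.G i) (hb : b ∈ S.G j) (u : M) (l : ℂ) :
    ShLM l (P.rho (S.lb l a b) (P.beta u))
      = Finsupp.mapRange.linearMap (pevLM l ∘ₗ P.rho (S.alpha a)) (P.rho b u)
        - sg i j • P.rho (S.alpha b) (P.ev l a u) := by
  apply pev_inj; intro m
  rw [pev_Sh, pev_sub, pev_smul, pev_mapC]
  exact hP.module_axiom i j a ha b hb u l m

/-- The module axiom with `μ` substituted by the operator `-m-∂`. -/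
lemma sa1 {i j : ZMod 2} {a b : R} (ha : a ∈ S.G i) (hb : b ∈ S.G j) (u : M) (l m : ℂ) :
    P.evOp m (S.lb l a b) (P.beta u)
      = P.ev l (S.alpha a) (P.evOp m b u)
        - sg i j • P.evOp (l + m) (S.alpha b) (P.ev l a u) := by
  have key := congrArg (pevOp ((-(l + m)) • (1 : Module.End ℂ M) - P.derM)) (axF hP ha hb u l)
  rw [pevOp_Sh, pevOp_sub, pevOp_smul] at key
  have e1 : l • (1 : Module.End ℂ M) + ((-(l + m)) • 1 - P.derM)
      = (-m) • (1 : Module.End ℂ M) - P.derM := by module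
  rw [e1] at key
  have e2 : (pevLM l ∘ₗ P.rho (S.alpha a)) ∘ₗ ((-m) • (1 : Module.End ℂ M) - P.derM)
      = ((-(l + m)) • (1 : Module.End ℂ M) - P.derM) ∘ₗ (pevLM l ∘ₗ P.rho (S.alpha a)) := by
    ext x
    simp only [LinearMap.comp_apply, LinearMap.sub_apply, LinearMap.smul_apply,
      Module.End.one_apply, map_sub, map_smul]
    have hc : (pevLM l) ((P.rho (S.alpha a)) (P.derM x))
        = P.derM ((pevLM l) ((P.rho (S.alpha a)) x)) + l • (pevLM l) ((P.rho (S.alpha a)) x) := by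
      have := hP.conf_right l (S.alpha a) x
      rw [ev_def, ev_def, pev_eq, pev_eq] at this
      exact this
    rw [hc]
    module
  rw [pevOp_mapC _ _ _ e2] at key
  exact key

/-- `ρ(c)_{-(l+m)-∂} ∘ (substitution of -l-∂)` equals
`ρ(c)_{-(l+m)-∂} ∘ (evaluation at m)`. -/
lemma dag (c : R) (q : ℕ →₀ M) (l m : ℂ) :
    pevOp ((-(l + m)) • (1 : Module.End ℂ M) - P.derM)
        (P.rho c (pevOp ((-l) • (1 : Module.End ℂ M) - P.derM) q))
      = pevOp ((-(l + m)) • (1 : Module.End ℂ M) - P.derM) (P.rho c (pev m q)) := by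
  set T' : Module.End ℂ M := (-(l + m)) • (1 : Module.End ℂ M) - P.derM with hT'
  set T'' : Module.End ℂ M := (-l) • (1 : Module.End ℂ M) - P.derM with hT''
  have step : ∀ x : M, pevOp T' (P.rho c (T'' x)) = m • pevOp T' (P.rho c x) := by
    intro x
    have hx : T'' x = (-l) • x - P.derM x := rfl
    rw [hx, map_sub, map_smul, pevOp_sub, pevOp_smul, rho_der_right hP, pevOp_add, pevOp_Up,
      pevOp_mapC P.derM _ _ (derM_comp_comm (l + m))]
    set Z := pevOp T' (P.rho c x)
    have hz : T' Z = (-(l + m)) • Z - P.derM Z := rfl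
    rw [hz]
    module
  have stepn : ∀ (n : ℕ) (x : M),
      pevOp T' (P.rho c ((T'' ^ n) x)) = (m ^ n) • pevOp T' (P.rho c x) := by
    intro n
    induction n with
    | zero => intro x; simp
    | succ n ih =>
      intro x
      rw [pow_succ, Module.End.mul_apply, ih (T'' x), step x, smul_smul, ← pow_succ]
  calc pevOp T' (P.rho c (pevOp T'' q))
      = pevOp T' (P.rho c (q.sum fun n r => (T'' ^ n) r)) := rfl
    _ = q.sum fun n r => pevOp T' (P.rho c ((T'' ^ n) r)) := by
        rw [map_finsuppSum, pevOp_eq, map_finsuppSum]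
        rfl
    _ = q.sum fun n r => pevOp T' (P.rho c ((m ^ n) • r)) := by
        refine Finsupp.sum_congr fun n _ => ?_
        rw [stepn n, map_smul, pevOp_smul]
    _ = pevOp T' (P.rho c (q.sum fun n r => (m ^ n) • r)) := by
        rw [map_finsuppSum, pevOp_eq, map_finsuppSum]
        rfl
    _ = pevOp T' (P.rho c (pev m q)) := rfl

lemma lb_mem (hS : IsHLCS S) {i j : ZMod 2} {a b : R} (ha : a ∈ S.G i) (hb : b ∈ S.G j) (l : ℂ) :
    S.lb l a b ∈ S.G (i + j) :=
  pev_mem _ _ (fun n => hS.br_grade i j a ha b hb n) l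

lemma ev_mem {i j : ZMod 2} {a : R} {v : M} (ha : a ∈ S.G i) (hv : v ∈ P.GM j) (l : ℂ) :
    P.ev l a v ∈ P.GM (i + j) :=
  pev_mem _ _ (fun n => hP.rho_grade i j a ha v hv n) l

lemma opStable (l : ℂ) (k : ZMod 2) :
    ∀ x ∈ P.GM k, ((-l) • (1 : Module.End ℂ M) - P.derM) x ∈ P.GM k := by
  intro x hx
  have : ((-l) • (1 : Module.End ℂ M) - P.derM) x = (-l) • x - P.derM x := rfl
  rw [this]
  exact Submodule.sub_mem _ (Submodule.smul_mem _ _ hx) (hP.derM_even k x hx)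

lemma evOp_mem {i j : ZMod 2} {a : R} {v : M} (ha : a ∈ S.G i) (hv : v ∈ P.GM j) (l : ℂ) :
    P.evOp l a v ∈ P.GM (i + j) :=
  pevOp_mem _ _ (opStable hP l (i + j)) _ (fun n => hP.rho_grade i j a ha v hv n)

end RepLemmas



section Core
set_option linter.unusedSectionVars false
variable {S : Data R} {P : RepData R M}
variable (hcR : IsCompl (S.G 0) (S.G 1)) (hcM : IsCompl (P.GM 0) (P.GM 1))

def Wmap (b : R) (u : M) : ℕ →₀ M :=
  ∑ p : ZMod 2, ∑ q : ZMod 2,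
    sg p q • TwLM P.derM (P.rho (prj2 S.G hcR q b) (prj2 P.GM hcM p u))

lemma sec_eq (x y : R × M) :
    sec S P hcR hcM x y = P.rho x.1 y.2 - Wmap hcR hcM y.1 x.2 := rfl

lemma Wmap_formula {i j : ZMod 2} {b : R} {u : M} (hb : b ∈ S.G j) (hu : u ∈ P.GM i) :
    Wmap hcR hcM b u = sg i j • TwLM P.derM (P.rho b u) := by
  rw [Wmap]
  rw [Finset.sum_eq_single i]
  · rw [Finset.sum_eq_single j]
    · rw [prj2_of_mem hcR hb, prj2_of_mem hcM hu]
    · intro q _ hq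
      rw [prj2_of_ne hcR hq hb, map_zero, LinearMap.zero_apply, map_zero, smul_zero]
    · intro h; exact absurd (Finset.mem_univ j) h
  · intro p _ hp
    apply Finset.sum_eq_zero
    intro q _
    rw [prj2_of_ne hcM hp hu, map_zero, map_zero, smul_zero]
  · intro h; exact absurd (Finset.mem_univ i) h

lemma Tw_Up (D : Module.End ℂ M) (p : ℕ →₀ M) :
    TwLM D (UpLM p) = -(Finsupp.mapRange.linearMap D (TwLM D p)) - UpLM (TwLM D p) := by
  apply pev_inj; intro l
  rw [pev_Tw, pevOp_Up, pev_sub, pev_neg, pev_mapC, pev_Up, pev_Tw]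
  set Z := pevOp ((-l) • (1 : Module.End ℂ M) - D) p
  have : ((-l) • (1 : Module.End ℂ M) - D) Z = (-l) • Z - D Z := rfl
  rw [this]
  module

lemma Tw_rho_der (hP : IsRep S P) (b : R) (u : M) :
    TwLM P.derM (P.rho b (P.derM u)) = -(UpLM (TwLM P.derM (P.rho b u))) := by
  apply pev_inj; intro l
  rw [pev_Tw, pevOp_rho_der_right' hP, pev_neg, pev_Up, pev_Tw, neg_smul]

lemma Tw_rho_derR (hP : IsRep S P) (b : R) (u : M) :
    TwLM P.derM (P.rho (S.der b) u)
      = Finsupp.mapRange.linearMap P.derM (TwLM P.derM (P.rho b u))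
        + UpLM (TwLM P.derM (P.rho b u)) := by
  rw [rho_der_left hP, map_neg, Tw_Up]
  abel

lemma Wmap_der_right (hP : IsRep S P) (b : R) (u : M) :
    Wmap hcR hcM b (P.derM u) = -(UpLM (Wmap hcR hcM b u)) := by
  have h : ∀ p q : ZMod 2,
      sg p q • TwLM P.derM (P.rho (prj2 S.G hcR q b) (prj2 P.GM hcM p (P.derM u)))
        = -(UpLM (sg p q • TwLM P.derM (P.rho (prj2 S.G hcR q b) (prj2 P.GM hcM p u)))) := by
    intro p q
    rw [prj2_comm hcM P.derM hP.derM_even, Tw_rho_der hP, smul_neg, map_smul]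
  simp only [Wmap, h, Finset.sum_neg_distrib, ← map_sum]

lemma Wmap_der_left (hP : IsRep S P) (hS : IsHLCS S) (b : R) (u : M) :
    Wmap hcR hcM (S.der b) u
      = Finsupp.mapRange.linearMap P.derM (Wmap hcR hcM b u) + UpLM (Wmap hcR hcM b u) := by
  have h : ∀ p q : ZMod 2,
      sg p q • TwLM P.derM (P.rho (prj2 S.G hcR q (S.der b)) (prj2 P.GM hcM p u))
        = Finsupp.mapRange.linearMap P.derM
            (sg p q • TwLM P.derM (P.rho (prj2 S.G hcR q b) (prj2 P.GM hcM p u)))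
          + UpLM (sg p q • TwLM P.derM (P.rho (prj2 S.G hcR q b) (prj2 P.GM hcM p u))) := by
    intro p q
    rw [prj2_comm hcR S.der hS.der_even, Tw_rho_derR hP, smul_add, map_smul, map_smul]
  simp only [Wmap, h, Finset.sum_add_distrib, ← map_sum]

lemma sec_derx (hP : IsRep S P) (x y : R × M) :
    sec S P hcR hcM ((Tdat hcR hcM).der x) y = -(UpLM (sec S P hcR hcM x y)) := by
  have h1 : ((Tdat hcR hcM).der x).1 = S.der x.1 := rfl
  have h2 : ((Tdat hcR hcM).der x).2 = P.derM x.2 := rfl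
  rw [sec_eq, sec_eq, h1, h2, rho_der_left hP, Wmap_der_right hcR hcM hP, map_sub]
  abel

lemma sec_dery (hP : IsRep S P) (hS : IsHLCS S) (x y : R × M) :
    sec S P hcR hcM x ((Tdat hcR hcM).der y)
      = Finsupp.mapRange.linearMap P.derM (sec S P hcR hcM x y)
        + UpLM (sec S P hcR hcM x y) := by
  have h1 : ((Tdat hcR hcM).der y).1 = S.der y.1 := rfl
  have h2 : ((Tdat hcR hcM).der y).2 = P.derM y.2 := rfl
  rw [sec_eq, sec_eq, h1, h2, rho_der_right hP, Wmap_der_left hcR hcM hP hS,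
    map_sub, map_sub]
  abel

lemma Tlb_eval (l : ℂ) (x y : R × M) :
    (Tdat hcR hcM).lb l x y = (S.lb l x.1 y.1, pev l (sec S P hcR hcM x y)) := by
  rw [Data.lb, Tdat_br, pair_pev]; rfl

lemma Tlb_formula {i j : ZMod 2} {a b : R} {u v : M}
    (ha : a ∈ S.G i) (hu : u ∈ P.GM i) (hb : b ∈ S.G j) (hv : v ∈ P.GM j) (l : ℂ) :
    (Tdat hcR hcM).lb l (a, u) (b, v)
      = (S.lb l a b, P.ev l a v - sg i j • P.evOp l b u) := by
  rw [Tlb_eval, sec_eq, Wmap_formula hcR hcM hb hu, pev_sub, pev_smul, pev_Tw]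
  rfl

lemma Tlb_add_right (l : ℂ) (x y y' : R × M) :
    (Tdat hcR hcM).lb l x (y + y') = (Tdat hcR hcM).lb l x y + (Tdat hcR hcM).lb l x y' := by
  rw [Data.lb, Data.lb, Data.lb, map_add, pev_add]

end Core



section Final
set_option linter.unusedSectionVars false
variable {S : Data R} {P : RepData R M}
variable (hcR : IsCompl (S.G 0) (S.G 1)) (hcM : IsCompl (P.GM 0) (P.GM 1))

lemma z2add00 : (0 + 0 : ZMod 2) = 0 := rfl
lemma z2add01 : (0 + 1 : ZMod 2) = 1 := rfl
lemma z2add10 : (1 + 0 : ZMod 2) = 1 := rfl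
lemma z2add11 : (1 + 1 : ZMod 2) = 0 := rfl

lemma Tdat_G (i : ZMod 2) : (Tdat hcR hcM).G i = (S.G i).prod (P.GM i) := rfl

lemma TlbOp_eval (hP : IsRep S P) {i j : ZMod 2} {a b : R} {u v : M}
    (ha : a ∈ S.G i) (hu : u ∈ P.GM i) (hb : b ∈ S.G j) (hv : v ∈ P.GM j) (l : ℂ) :
    (Tdat hcR hcM).lbOp l (b, v) (a, u)
      = (S.lbOp l b a, P.evOp l b u - sg i j • P.ev l a v) := by
  have e0 : (Tdat hcR hcM).der = LinearMap.prodMap S.der P.derM := rfl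
  rw [Data.lbOp, Tdat_br, e0, pair_pevOp]
  have e1 : sec S P hcR hcM (b, v) (a, u)
      = P.rho b u - sg i j • TwLM P.derM (P.rho a v) := by
    rw [sec_eq, Wmap_formula hcR hcM (i := j) (j := i) ha hv, sg_comm]
  rw [e1, pevOp_sub, pevOp_smul,
    pevOp_Tw _ _ (derM_commute (P := P) l)]
  have e2 : -(((-l) • (1 : Module.End ℂ M) - P.derM) + P.derM)
      = l • (1 : Module.End ℂ M) := by module
  rw [e2, ← pev_pevOp]
  rfl

/-- Jacobi identity for the semidirect data, homogeneous arguments. -/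
lemma jac_homog (hP : IsRep S P) (hS : IsHLCS S) {i j k : ZMod 2} {a b c : R} {u v w : M}
    (ha : a ∈ S.G i) (hu : u ∈ P.GM i) (hb : b ∈ S.G j) (hv : v ∈ P.GM j)
    (hc : c ∈ S.G k) (hw : w ∈ P.GM k) (l m : ℂ) :
    (Tdat hcR hcM).lb l ((Tdat hcR hcM).alpha (a, u)) ((Tdat hcR hcM).lb m (b, v) (c, w))
      = (Tdat hcR hcM).lb (l + m) ((Tdat hcR hcM).lb l (a, u) (b, v))
          ((Tdat hcR hcM).alpha (c, w))
        + sg i j • (Tdat hcR hcM).lb m ((Tdat hcR hcM).alpha (b, v))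
            ((Tdat hcR hcM).lb l (a, u) (c, w)) := by
  have hAa : S.alpha a ∈ S.G i := hS.alpha_even i a ha
  have hAb : S.alpha b ∈ S.G j := hS.alpha_even j b hb
  have hAc : S.alpha c ∈ S.G k := hS.alpha_even k c hc
  have hBu : P.beta u ∈ P.GM i := hP.beta_even i u hu
  have hBv : P.beta v ∈ P.GM j := hP.beta_even j v hv
  have hBw : P.beta w ∈ P.GM k := hP.beta_even k w hw
  have hbc1 : S.lb m b c ∈ S.G (j + k) := lb_mem hP hS hb hc m
  have hbc2 : P.ev m b w - sg j k • P.evOp m c v ∈ P.GM (j + k) :=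
    Submodule.sub_mem _ (ev_mem hP hb hw m)
      (Submodule.smul_mem _ _ (add_comm k j ▸ evOp_mem hP hc hv m))
  have hab1 : S.lb l a b ∈ S.G (i + j) := lb_mem hP hS ha hb l
  have hab2 : P.ev l a v - sg i j • P.evOp l b u ∈ P.GM (i + j) :=
    Submodule.sub_mem _ (ev_mem hP ha hv l)
      (Submodule.smul_mem _ _ (add_comm j i ▸ evOp_mem hP hb hu l))
  have hac1 : S.lb l a c ∈ S.G (i + k) := lb_mem hP hS ha hc l
  have hac2 : P.ev l a w - sg i k • P.evOp l c u ∈ P.GM (i + k) :=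
    Submodule.sub_mem _ (ev_mem hP ha hw l)
      (Submodule.smul_mem _ _ (add_comm k i ▸ evOp_mem hP hc hu l))
  have eA : (Tdat hcR hcM).alpha (a, u) = (S.alpha a, P.beta u) := rfl
  have eB : (Tdat hcR hcM).alpha (b, v) = (S.alpha b, P.beta v) := rfl
  have eC : (Tdat hcR hcM).alpha (c, w) = (S.alpha c, P.beta w) := rfl
  rw [eA, eB, eC,
    Tlb_formula hcR hcM hb hv hc hw m,
    Tlb_formula hcR hcM ha hu hb hv l,
    Tlb_formula hcR hcM ha hu hc hw l,
    Tlb_formula hcR hcM hAa hBu hbc1 hbc2 l,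
    Tlb_formula hcR hcM hab1 hab2 hAc hBw (l + m),
    Tlb_formula hcR hcM hAb hBv hac1 hac2 m,
    Prod.smul_mk, Prod.mk_add_mk]
  refine Prod.ext (hS.jacobi i j a ha b hb c l m) ?_
  -- second component
  have h1 := hP.module_axiom i j a ha b hb w l m
  have h2 := sa1 hP ha hc v l m
  have h3 := sa1 hP hb hc u m l
  rw [add_comm m l] at h3
  have h4 : P.evOp (l + m) (S.alpha c) (P.evOp l b u)
      = P.evOp (l + m) (S.alpha c) (P.ev m b u) := dag hP (S.alpha c) (P.rho b u) l m
  simp only [ev_sub, ev_smul2, evOp_sub, evOp_smul2]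
  rw [h1, h2, h3, h4]
  rcases z2cases i with hi | hi <;> rcases z2cases j with hj | hj <;>
    rcases z2cases k with hk | hk <;>
    subst hi <;> subst hj <;> subst hk <;>
    simp only [z2add00, z2add01, z2add10, z2add11,
      sg_vals.1, sg_vals.2.1, sg_vals.2.2.1, sg_vals.2.2.2] <;>
    module

end Final


/-- If `(ρ, M, β)` is a representation of the Hom-Lie conformal
superalgebra `(R, α)`, then `R ⊕ M`, with `∂(a + u) = ∂a + ∂u`, bracket
`[(a+u)_λ (b+v)] = [a_λ b] + ρ(a)_λ v - (-1)^{|a||b|} ρ(b)_{-∂-λ} u` and twist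
`(α + β)(a + u) = α(a) + β(u)`, is a Hom-Lie conformal superalgebra. -/
theorem semidirect_homLie (S : Data R) (P : RepData R M)
    (hS : IsHLCS S) (hP : IsRep S P) :
    ∃ T : Data (R × M),
      T.der = LinearMap.prodMap (S.der : R →ₗ[ℂ] R) (P.derM : M →ₗ[ℂ] M) ∧
      T.alpha = LinearMap.prodMap (S.alpha : R →ₗ[ℂ] R) (P.beta : M →ₗ[ℂ] M) ∧
      T.G = (fun i => (S.G i).prod (P.GM i)) ∧
      (∀ i j, ∀ a ∈ S.G i, ∀ u ∈ P.GM i, ∀ b ∈ S.G j, ∀ v ∈ P.GM j, ∀ l : ℂ,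
        T.lb l (a, u) (b, v) =
          (S.lb l a b, P.ev l a v - sg i j • P.evOp l b u)) ∧
      IsHLCS T := by
  have hcR : IsCompl (S.G 0) (S.G 1) := isCompl_of_isInternal hS.internal
  have hcM : IsCompl (P.GM 0) (P.GM 1) := isCompl_of_isInternal hP.internal
  refine ⟨Tdat hcR hcM, rfl, rfl, rfl,
    fun i j a ha u hu b hb v hv l => Tlb_formula hcR hcM ha hu hb hv l, ?_⟩
  constructor
  -- internal
  · apply isInternal_of_isCompl
    constructor
    · rw [Submodule.disjoint_def]
      intro x hx0 hx1
      rw [Tdat_G, Submodule.mem_prod] at hx0 hx1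
      exact Prod.ext (Submodule.disjoint_def.mp hcR.disjoint x.1 hx0.1 hx1.1)
        (Submodule.disjoint_def.mp hcM.disjoint x.2 hx0.2 hx1.2)
    · rw [codisjoint_iff, eq_top_iff]
      intro z _
      have hz : z = ((prj2 S.G hcR 0 z.1, prj2 P.GM hcM 0 z.2) : R × M)
          + (prj2 S.G hcR 1 z.1, prj2 P.GM hcM 1 z.2) := by
        rw [Prod.mk_add_mk, prj2_sum hcR z.1, prj2_sum hcM z.2]
      rw [hz]
      exact Submodule.add_mem_sup
        (Submodule.mem_prod.mpr ⟨prj2_mem hcR 0 z.1, prj2_mem hcM 0 z.2⟩)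
        (Submodule.mem_prod.mpr ⟨prj2_mem hcR 1 z.1, prj2_mem hcM 1 z.2⟩)
  -- der_even
  · intro i x hx
    rw [Tdat_G, Submodule.mem_prod] at hx ⊢
    exact ⟨hS.der_even i x.1 hx.1, hP.derM_even i x.2 hx.2⟩
  -- alpha_even
  · intro i x hx
    rw [Tdat_G, Submodule.mem_prod] at hx ⊢
    exact ⟨hS.alpha_even i x.1 hx.1, hP.beta_even i x.2 hx.2⟩
  -- alpha_der
  · intro x
    exact Prod.ext (hS.alpha_der x.1) (hP.beta_derM x.2)
  -- br_grade
  · intro i j x hx y hy n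
    rw [Tdat_G, Submodule.mem_prod] at hx hy
    rw [Tdat_br, pair_coeff, Tdat_G, Submodule.mem_prod]
    constructor
    · exact hS.br_grade i j x.1 hx.1 y.1 hy.1 n
    · rw [sec_eq, Wmap_formula hcR hcM hy.1 hx.2, Finsupp.sub_apply, Finsupp.smul_apply]
      refine Submodule.sub_mem _ (hP.rho_grade i j x.1 hx.1 y.2 hy.2 n)
        (Submodule.smul_mem _ _ ?_)
      exact TwLM_coeff_mem _ _ (hP.derM_even (i + j)) _
        (fun m => add_comm j i ▸ hP.rho_grade j i y.1 hy.1 x.2 hx.2 m) n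
  -- conf_left
  · intro l x y
    rw [Tlb_eval, Tlb_eval, sec_derx hcR hcM hP]
    have h1 : ((Tdat hcR hcM).der x).1 = S.der x.1 := rfl
    rw [h1, hS.conf_left, pev_neg, pev_Up, Prod.smul_mk]
    simp only [neg_smul]
  -- conf_right
  · intro l x y
    rw [Tlb_eval, Tlb_eval, sec_dery hcR hcM hP hS]
    have h1 : ((Tdat hcR hcM).der y).1 = S.der y.1 := rfl
    have h2 : (Tdat hcR hcM).der (S.lb l x.1 y.1, pev l (sec S P hcR hcM x y))
        = (S.der (S.lb l x.1 y.1), P.derM (pev l (sec S P hcR hcM x y))) := rfl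
    rw [h1, hS.conf_right, pev_add, pev_mapC, pev_Up, h2, Prod.smul_mk, Prod.mk_add_mk]
  -- skew
  · intro i j x hx y hy l
    rw [Tdat_G, Submodule.mem_prod] at hx hy
    have hx' : x = (x.1, x.2) := rfl
    have hy' : y = (y.1, y.2) := rfl
    rw [hx', hy', Tlb_formula hcR hcM hx.1 hx.2 hy.1 hy.2 l,
      TlbOp_eval hcR hcM hP hx.1 hx.2 hy.1 hy.2 l,
      hS.skew i j x.1 hx.1 y.1 hy.1 l, Prod.smul_mk]
    refine Prod.ext rfl ?_
    dsimp only
    rcases z2cases i with hi | hi <;> rcases z2cases j with hj | hj <;>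
      subst hi <;> subst hj <;>
      simp only [sg_vals.1, sg_vals.2.1, sg_vals.2.2.1, sg_vals.2.2.2] <;>
      module
  -- jacobi
  · intro i j x hx y hy z l m
    rw [Tdat_G, Submodule.mem_prod] at hx hy
    obtain ⟨a, u⟩ := x
    obtain ⟨b, v⟩ := y
    have ha : a ∈ S.G i := hx.1
    have hu : u ∈ P.GM i := hx.2
    have hb : b ∈ S.G j := hy.1
    have hv : v ∈ P.GM j := hy.2
    have hz : z = ((prj2 S.G hcR 0 z.1, prj2 P.GM hcM 0 z.2) : R × M)
        + (prj2 S.G hcR 1 z.1, prj2 P.GM hcM 1 z.2) := by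
      rw [Prod.mk_add_mk, prj2_sum hcR z.1, prj2_sum hcM z.2]
    rw [hz]
    simp only [Tlb_add_right, map_add, smul_add]
    rw [jac_homog hcR hcM hP hS ha hu hb hv (prj2_mem hcR 0 z.1) (prj2_mem hcM 0 z.2) l m,
      jac_homog hcR hcM hP hS ha hu hb hv (prj2_mem hcR 1 z.1) (prj2_mem hcM 1 z.2) l m]
    abel

end HLCS
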